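/- Comparison principle: Let U ⊆ ℝⁿ be open and bounded, let f : closure(U) → ℝ be continuous and nonnegative, and set A = {x ∈ U : f(x) = 0}. If u and v are viscosity solutions of |Du| = f in U with zero Dirichlet boundary data, and u(x) ≤ v(x) for every x ∈ A, then u(x) ≤ v(x) for every x ∈ U. -/

import Mathlib

open Filter Set Real

set_option maxHeartbeats 2000000
set_option synthInstance.maxHeartbeats 1000000

private lemma aux_hasFDerivAt {n : ℕ} (y : EuclideanSpace ℝ (Fin n)) (a c : ℝ)
    (x : EuclideanSpace ℝ (Fin n)) :
    HasFDerivAt (fun z => a + c * ‖z - y‖ ^ 2) ((c * 2) • innerSL ℝ (x - y)) x := by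
  have h := (((hasFDerivAt_id x).sub_const y).norm_sq.const_mul c).const_add a
  refine h.congr_fderiv ?_
  ext z
  simp [mul_assoc]

private lemma aux_contDiff {n : ℕ} (y : EuclideanSpace ℝ (Fin n)) (a c : ℝ) :
    ContDiff ℝ 1 (fun z : EuclideanSpace ℝ (Fin n) => a + c * ‖z - y‖ ^ 2) :=
  contDiff_const.add (contDiff_const.mul ((contDiff_id.sub contDiff_const).norm_sq ℝ))

private lemma aux_norm {n : ℕ} (w : EuclideanSpace ℝ (Fin n)) (c : ℝ) :
    ‖c • innerSL ℝ w‖ = |c| * ‖w‖ := by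
  have h : c • innerSL ℝ w = innerSL ℝ (c • w) := by
    ext z; simp [real_inner_smul_left]
  rw [h, innerSL_apply_norm, norm_smul, Real.norm_eq_abs]

private theorem eikonal_comparison_aux
    (n : ℕ) (U : Set (EuclideanSpace ℝ (Fin n)))
    (hUopen : IsOpen U) (hUbdd : Bornology.IsBounded U)
    (f : EuclideanSpace ℝ (Fin n) → ℝ)
    (hf : ContinuousOn f (closure U)) (hf0 : ∀ x ∈ closure U, 0 ≤ f x)
    (u v : EuclideanSpace ℝ (Fin n) → ℝ)
    (huUC : UniformContinuousOn u (closure U))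
    (huB : Bornology.IsBounded (u '' closure U))
    (huBd : ∀ x ∈ frontier U, u x ≤ 0)
    (huT : ∀ φ : EuclideanSpace ℝ (Fin n) → ℝ, ContDiff ℝ 1 φ →
          ∀ x₀ ∈ U, IsLocalMax (fun x => u x - φ x) x₀ → ‖fderiv ℝ φ x₀‖ ≤ f x₀)
    (hvUC : UniformContinuousOn v (closure U))
    (hvB : Bornology.IsBounded (v '' closure U))
    (hvBd' : ∀ x ∈ frontier U, 0 ≤ v x)
    (hvT' : ∀ φ : EuclideanSpace ℝ (Fin n) → ℝ, ContDiff ℝ 1 φ →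
          ∀ x₀ ∈ U, IsLocalMin (fun x => v x - φ x) x₀ → f x₀ ≤ ‖fderiv ℝ φ x₀‖)
    (hA : ∀ x ∈ U, f x = 0 → u x ≤ v x) :
    ∀ x ∈ U, u x ≤ v x := by
  intro x₀ hx₀
  by_contra hcon
  push_neg at hcon
  obtain ⟨δ, hδdef⟩ : ∃ δ : ℝ, δ = u x₀ - v x₀ := ⟨_, rfl⟩
  have hδ : 0 < δ := by rw [hδdef]; linarith
  have hKcl : IsClosed (closure U) := isClosed_closure
  have hKc : IsCompact (closure U) := Metric.isCompact_of_isClosed_isBounded hKcl hUbdd.closure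
  have hUK : U ⊆ closure U := subset_closure
  have hx₀K : x₀ ∈ closure U := hUK hx₀
  have huK : ContinuousOn u (closure U) := huUC.continuousOn
  have hvK : ContinuousOn v (closure U) := hvUC.continuousOn
  obtain ⟨C₀, hC₀⟩ := isBounded_iff_forall_norm_le.mp huB
  obtain ⟨C₁, hC₁⟩ := isBounded_iff_forall_norm_le.mp hvB
  obtain ⟨C, hCdef⟩ : ∃ C : ℝ, C = max (max C₀ C₁) 1 := ⟨_, rfl⟩
  have hC1 : (1:ℝ) ≤ C := hCdef ▸ le_max_right _ _
  have hC0 : (0:ℝ) < C := lt_of_lt_of_le one_pos hC1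
  have hCu : ∀ x ∈ closure U, |u x| ≤ C := by
    intro x hx
    have h := hC₀ (u x) ⟨x, hx, rfl⟩
    rw [Real.norm_eq_abs] at h
    exact h.trans (hCdef ▸ (le_max_left C₀ C₁).trans (le_max_left _ 1))
  have hCv : ∀ x ∈ closure U, |v x| ≤ C := by
    intro x hx
    have h := hC₁ (v x) ⟨x, hx, rfl⟩
    rw [Real.norm_eq_abs] at h
    exact h.trans (hCdef ▸ (le_max_right C₀ C₁).trans (le_max_left _ 1))
  -- choose lambda
  obtain ⟨lam, hlamdef⟩ : ∃ lam : ℝ, lam = 1 - min (δ/(4*C)) (1/2) := ⟨_, rfl⟩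
  have hs0 : 0 < min (δ/(4*C)) (1/2) := lt_min (by positivity) one_half_pos
  have hs2 : min (δ/(4*C)) (1/2) ≤ 1/2 := min_le_right _ _
  have hlam0 : 0 < lam := by rw [hlamdef]; linarith
  have hlam1 : lam < 1 := by rw [hlamdef]; linarith
  have hlamC : (1 - lam) * C ≤ δ/4 := by
    have h1 : min (δ/(4*C)) (1/2) * C ≤ δ/(4*C) * C :=
      mul_le_mul_of_nonneg_right (min_le_left _ _) hC0.le
    have h2 : δ/(4*C)*C = δ/4 := by field_simp
    have h3 : (1 - lam) = min (δ/(4*C)) (1/2) := by rw [hlamdef]; ring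
    rw [h3]; linarith
  -- maximize g := lam * u - v on closure U
  obtain ⟨g, hgdef⟩ : ∃ g : EuclideanSpace ℝ (Fin n) → ℝ,
      g = fun x => lam * u x - v x := ⟨_, rfl⟩
  have hgx : ∀ x, g x = lam * u x - v x := fun x => by rw [hgdef]
  have hgK : ContinuousOn g (closure U) := by
    rw [hgdef]; exact (continuousOn_const.mul huK).sub hvK
  obtain ⟨z, hzK, hzmax⟩ := hKc.exists_isMaxOn ⟨x₀, hx₀K⟩ hgK
  obtain ⟨M, hMdef⟩ : ∃ M : ℝ, M = g z := ⟨_, rfl⟩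
  have hM : ∀ x ∈ closure U, g x ≤ M := fun x hx => hMdef ▸ hzmax hx
  have hMlb : 3*δ/4 ≤ M := by
    have h2 : lam * u x₀ - v x₀ ≤ M := by rw [← hgx x₀]; exact hM x₀ hx₀K
    have habs := abs_le.mp (hCu x₀ hx₀K)
    have h1l : 0 ≤ 1 - lam := by linarith
    have e2 : (1-lam) * u x₀ ≤ (1-lam)*C := mul_le_mul_of_nonneg_left habs.2 h1l
    have e : lam * u x₀ - v x₀ = δ - (1-lam) * u x₀ := by rw [hδdef]; ring
    linarith
  -- the compact set K' where g is nearly maximal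
  obtain ⟨K', hK'def⟩ : ∃ K' : Set (EuclideanSpace ℝ (Fin n)),
      K' = closure U ∩ g ⁻¹' (Ici (M - δ/8)) := ⟨_, rfl⟩
  have hK'cl : IsClosed K' := by
    rw [hK'def]; exact hgK.preimage_isClosed_of_isClosed hKcl isClosed_Ici
  have hK'sub : K' ⊆ closure U := by rw [hK'def]; exact inter_subset_left
  have hK'c : IsCompact K' := hKc.of_isClosed_subset hK'cl hK'sub
  have hK'mem : ∀ x, x ∈ K' ↔ (x ∈ closure U ∧ M - δ/8 ≤ g x) := by
    intro x; rw [hK'def]; simp [mem_preimage, mem_Ici]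
  have hzK' : z ∈ K' := (hK'mem z).mpr ⟨hzK, by rw [← hMdef]; linarith⟩
  have hfrontier : ∀ x ∈ closure U, x ∉ U → (u x ≤ 0 ∧ 0 ≤ v x) := by
    intro x hx hxU
    have hxF : x ∈ frontier U := by rw [hUopen.frontier_eq]; exact ⟨hx, hxU⟩
    exact ⟨huBd x hxF, hvBd' x hxF⟩
  have hK'U : ∀ x ∈ K', x ∈ U := by
    intro x hx
    by_contra hxU
    obtain ⟨hx1, hx2⟩ := (hK'mem x).mp hx
    obtain ⟨h1, h2⟩ := hfrontier x hx1 hxU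
    have hge := hgx x
    have hlu : lam * u x ≤ 0 := mul_nonpos_iff.mpr (Or.inl ⟨hlam0.le, h1⟩)
    linarith
  -- minimum of f on K'
  have hfK' : ContinuousOn f K' := hf.mono hK'sub
  obtain ⟨w, hwK', hwmin⟩ := hK'c.exists_isMinOn ⟨z, hzK'⟩ hfK'
  obtain ⟨m, hmdef⟩ : ∃ m : ℝ, m = f w := ⟨_, rfl⟩
  have hmin : ∀ x ∈ K', m ≤ f x := fun x hx => hmdef ▸ hwmin hx
  have hwK : w ∈ closure U := hK'sub hwK'
  have hm : 0 < m := by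
    rcases (hf0 w hwK).lt_or_eq with h | h
    · rw [hmdef]; exact h
    · exfalso
      have hwU : w ∈ U := hK'U w hwK'
      have huv : u w ≤ v w := hA w hwU h.symm
      have h3 : M - δ/8 ≤ g w := ((hK'mem w).mp hwK').2
      have hge := hgx w
      have habs := abs_le.mp (hCu w hwK)
      have h1l : 0 ≤ 1 - lam := by linarith
      have e2 : (1-lam) * (-u w) ≤ (1-lam)*C := by
        apply mul_le_mul_of_nonneg_left _ h1l; linarith [habs.1]
      nlinarith
  -- uniform continuity choices
  have hfUC : UniformContinuousOn f (closure U) := hKc.uniformContinuousOn_of_continuous hf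
  rw [Metric.uniformContinuousOn_iff] at hfUC huUC hvUC
  obtain ⟨ρu, hρu0, hρu⟩ := huUC (δ/8) (by positivity)
  obtain ⟨ρv, hρv0, hρv⟩ := hvUC (δ/8) (by positivity)
  obtain ⟨ρf, hρf0, hρf⟩ := hfUC ((1-lam)*m) (mul_pos (by linarith) hm)
  obtain ⟨ρ, hρdef⟩ : ∃ ρ : ℝ, ρ = min (min ρu ρv) ρf := ⟨_, rfl⟩
  have hρ0 : 0 < ρ := hρdef ▸ lt_min (lt_min hρu0 hρv0) hρf0
  have hρu' : ρ ≤ ρu := hρdef ▸ (min_le_left _ _).trans (min_le_left _ _)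
  have hρv' : ρ ≤ ρv := hρdef ▸ (min_le_left _ _).trans (min_le_right _ _)
  have hρf' : ρ ≤ ρf := hρdef ▸ min_le_right _ _
  -- epsilon
  obtain ⟨ε, hεdef⟩ : ∃ ε : ℝ, ε = ρ^2/(4*C) := ⟨_, rfl⟩
  have hε0 : 0 < ε := by rw [hεdef]; positivity
  -- maximize the doubled functional
  obtain ⟨Φ, hΦdef⟩ : ∃ Φ : (EuclideanSpace ℝ (Fin n)) × (EuclideanSpace ℝ (Fin n)) → ℝ,
      Φ = fun p => lam * u p.1 - v p.2 - ‖p.1 - p.2‖^2/ε := ⟨_, rfl⟩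
  have hΦx : ∀ p : (EuclideanSpace ℝ (Fin n)) × (EuclideanSpace ℝ (Fin n)),
      Φ p = lam * u p.1 - v p.2 - ‖p.1 - p.2‖^2/ε := fun p => by rw [hΦdef]
  have hΦK : ContinuousOn Φ ((closure U) ×ˢ (closure U)) := by
    rw [hΦdef]
    apply ContinuousOn.sub
    · exact (continuousOn_const.mul (huK.comp continuous_fst.continuousOn (fun p hp => hp.1))).sub
        (hvK.comp continuous_snd.continuousOn (fun p hp => hp.2))
    · exact (((continuous_fst.sub continuous_snd).norm.pow 2).div_const ε).continuousOn
  obtain ⟨p, hpK, hpmax⟩ := (hKc.prod hKc).exists_isMaxOn ⟨(x₀,x₀), ⟨hx₀K, hx₀K⟩⟩ hΦK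
  obtain ⟨a, b⟩ := p
  have haK : a ∈ closure U := hpK.1
  have hbK : b ∈ closure U := hpK.2
  have hmax : ∀ q ∈ (closure U) ×ˢ (closure U), Φ q ≤ Φ (a,b) := fun q hq => hpmax hq
  have hMab : M ≤ lam * u a - v b - ‖a - b‖^2/ε := by
    have h := hmax (z,z) ⟨hzK, hzK⟩
    rw [hΦx (z,z), hΦx (a,b)] at h
    simp only [sub_self, norm_zero] at h
    have hz0 : (0:ℝ)^2/ε = 0 := by simp
    rw [hMdef, hgx z]
    linarith [h, hz0.symm ▸ h]
  have hpen0 : 0 ≤ ‖a - b‖^2/ε := by positivity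
  have hMab' : M ≤ lam * u a - v b := by linarith
  have hvb_bound : ‖a - b‖^2/ε ≤ v a - v b := by
    have h := hmax (a,a) ⟨haK, haK⟩
    rw [hΦx (a,a), hΦx (a,b)] at h
    simp only [sub_self, norm_zero] at h
    have hz0 : (0:ℝ)^2/ε = 0 := by simp
    linarith [hz0 ▸ h]
  have hab2 : ‖a - b‖^2 ≤ ρ^2/2 := by
    have h2C : v a - v b ≤ 2*C := by
      have h1 := abs_le.mp (hCv a haK); have h2 := abs_le.mp (hCv b hbK); linarith
    have h1 : ‖a - b‖^2/ε ≤ 2*C := hvb_bound.trans h2C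
    have h2 : ‖a - b‖^2 ≤ 2*C*ε := by
      rw [div_le_iff₀ hε0] at h1; linarith
    have h3 : 2*C*ε = ρ^2/2 := by rw [hεdef]; field_simp; ring
    linarith
  have habρ : dist a b < ρ := by
    rw [dist_eq_norm]
    nlinarith [norm_nonneg (a-b), hρ0]
  have hvab : |v a - v b| < δ/8 := by
    have h := hρv a haK b hbK (habρ.trans_le hρv')
    rwa [Real.dist_eq] at h
  have huab : |u a - u b| < δ/8 := by
    have h := hρu a haK b hbK (habρ.trans_le hρu')
    rwa [Real.dist_eq] at h
  have hfab : |f a - f b| < (1-lam)*m := by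
    have h := hρf a haK b hbK (habρ.trans_le hρf')
    rwa [Real.dist_eq] at h
  -- a and b are interior
  have haU : a ∈ U := by
    by_contra h
    obtain ⟨h1, h2⟩ := hfrontier a haK h
    have h3 := abs_lt.mp hvab
    have hlu : lam * u a ≤ 0 := mul_nonpos_iff.mpr (Or.inl ⟨hlam0.le, h1⟩)
    linarith
  have hbU : b ∈ U := by
    by_contra h
    obtain ⟨h1, h2⟩ := hfrontier b hbK h
    have h3 := abs_lt.mp huab
    have hua : u a < δ/8 := by linarith
    rcases le_or_gt (u a) 0 with h' | h'
    · have hlu : lam * u a ≤ 0 := mul_nonpos_iff.mpr (Or.inl ⟨hlam0.le, h'⟩)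
      linarith
    · have hlu : lam * u a ≤ u a := by nlinarith
      linarith
  -- a is in K', so f a ≥ m
  have haK' : a ∈ K' := by
    refine (hK'mem a).mpr ⟨haK, ?_⟩
    have h3 := abs_lt.mp hvab
    rw [hgx a]
    linarith
  have hfa : m ≤ f a := hmin a haK'
  have hfb0 : 0 ≤ f b := hf0 b hbK
  -- subsolution inequality at a
  have key1 : 2*‖a - b‖/ε ≤ lam * f a := by
    have hc0 : (0:ℝ) < 1/(ε*lam) := by positivity
    have hlamne : lam ≠ 0 := hlam0.ne'
    have e1 : ∀ y : EuclideanSpace ℝ (Fin n),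
        u y - (v b * (1/lam) + (1/(ε*lam)) * ‖y - b‖^2)
        = (lam * u y - v b - ‖y - b‖^2/ε)/lam := by
      intro y; field_simp; ring
    have hloc : IsLocalMax
        (fun x => u x - (v b * (1/lam) + (1/(ε*lam)) * ‖x - b‖^2)) a := by
      filter_upwards [hUopen.mem_nhds haU] with x hx
      have hΦ2 := hmax (x, b) ⟨hUK hx, hbK⟩
      rw [hΦx (x,b), hΦx (a,b)] at hΦ2
      show u x - (v b * (1/lam) + (1/(ε*lam)) * ‖x - b‖^2)
          ≤ u a - (v b * (1/lam) + (1/(ε*lam)) * ‖a - b‖^2)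
      rw [e1 x, e1 a]
      gcongr
    have hd := aux_hasFDerivAt b (v b * (1/lam)) (1/(ε*lam)) a
    have hsub := huT _ (aux_contDiff b (v b * (1/lam)) (1/(ε*lam))) a haU hloc
    rw [hd.fderiv, aux_norm, abs_of_pos (by positivity)] at hsub
    -- hsub : 1/(ε*lam)*2 * ‖a - b‖ ≤ f a
    have hmul := mul_le_mul_of_nonneg_left hsub hlam0.le
    have e2 : lam * (1/(ε*lam)*2 * ‖a - b‖) = 2*‖a - b‖/ε := by
      field_simp
    rw [e2] at hmul
    exact hmul
  -- supersolution inequality at b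
  have key2 : f b ≤ 2*‖a - b‖/ε := by
    have hloc : IsLocalMin
        (fun y => v y - (lam * u a + (-(1/ε)) * ‖y - a‖^2)) b := by
      filter_upwards [hUopen.mem_nhds hbU] with y hy
      have hΦ2 := hmax (a, y) ⟨haK, hUK hy⟩
      rw [hΦx (a,y), hΦx (a,b)] at hΦ2
      show v b - (lam * u a + (-(1/ε)) * ‖b - a‖^2)
          ≤ v y - (lam * u a + (-(1/ε)) * ‖y - a‖^2)
      rw [norm_sub_rev b a, norm_sub_rev y a]
      have e3 : ∀ t : ℝ, -(1/ε) * t = -(t/ε) := by intro t; field_simp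
      rw [e3, e3]
      linarith
    have hd := aux_hasFDerivAt a (lam * u a) (-(1/ε)) b
    have hsup := hvT' _ (aux_contDiff a (lam * u a) (-(1/ε))) b hbU hloc
    rw [hd.fderiv, aux_norm] at hsup
    have e4 : |(-(1/ε)) * 2| * ‖b - a‖ = 2*‖a - b‖/ε := by
      have : |(-(1/ε)) * 2| = 2/ε := by
        have hneg : (-(1/ε)) * 2 < 0 := by
          have : (0:ℝ) < 1/ε := by positivity
          nlinarith
        rw [abs_of_neg hneg]
        field_simp
      rw [this, norm_sub_rev b a]
      ring
    rw [e4] at hsup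
    exact hsup
  -- final contradiction
  have h1 := abs_lt.mp hfab
  have h1l : 0 < 1 - lam := by linarith
  nlinarith [mul_nonneg h1l.le (by linarith : (0:ℝ) ≤ f a - m)]

/-- A bounded uniformly continuous function `u` on `closure U` is a viscosity
subsolution of `|Du| = f` in `U` with zero Dirichlet boundary data if `u ≤ 0` on `∂U`
and whenever `φ` is continuously differentiable and `u - φ` attains a local maximum at
`x₀ ∈ U`, then `‖Dφ(x₀)‖ ≤ f(x₀)`. -/
def IsViscositySubsolutionEikonal (n : ℕ) (U : Set (EuclideanSpace ℝ (Fin n)))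
    (f u : EuclideanSpace ℝ (Fin n) → ℝ) : Prop :=
  (∀ x ∈ frontier U, u x ≤ 0) ∧
    ∀ φ : EuclideanSpace ℝ (Fin n) → ℝ, ContDiff ℝ 1 φ →
      ∀ x₀ ∈ U, IsLocalMax (fun x => u x - φ x) x₀ → ‖fderiv ℝ φ x₀‖ ≤ f x₀

/-- Viscosity supersolution of `|Du| = f` in `U` with zero Dirichlet boundary data. -/
def IsViscositySupersolutionEikonal (n : ℕ) (U : Set (EuclideanSpace ℝ (Fin n)))
    (f u : EuclideanSpace ℝ (Fin n) → ℝ) : Prop :=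
  (∀ x ∈ frontier U, 0 ≤ u x) ∧
    ∀ φ : EuclideanSpace ℝ (Fin n) → ℝ, ContDiff ℝ 1 φ →
      ∀ x₀ ∈ U, IsLocalMin (fun x => u x - φ x) x₀ → f x₀ ≤ ‖fderiv ℝ φ x₀‖

/-- Viscosity solution of `|Du| = f` in `U` with zero Dirichlet boundary data:
a bounded, uniformly continuous function on `closure U` that is both a viscosity
subsolution and a viscosity supersolution. -/
def IsViscositySolutionEikonal (n : ℕ) (U : Set (EuclideanSpace ℝ (Fin n)))
    (f u : EuclideanSpace ℝ (Fin n) → ℝ) : Prop :=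
  UniformContinuousOn u (closure U) ∧ Bornology.IsBounded (u '' closure U) ∧
    IsViscositySubsolutionEikonal n U f u ∧ IsViscositySupersolutionEikonal n U f u

/-- Comparison principle: let `U ⊆ ℝⁿ` be open and bounded, `f`
continuous and nonnegative on `closure U`, and `A = {x ∈ U : f x = 0}`. If `u` and `v`
are viscosity solutions of `|Du| = f` in `U` with zero Dirichlet boundary data, and
`u ≤ v` on `A`, then `u ≤ v` in `U`. -/
theorem eikonal_comparison_principle
    (n : ℕ) (U : Set (EuclideanSpace ℝ (Fin n)))
    (hUopen : IsOpen U) (hUbdd : Bornology.IsBounded U)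
    (f : EuclideanSpace ℝ (Fin n) → ℝ)
    (hf : ContinuousOn f (closure U)) (hf0 : ∀ x ∈ closure U, 0 ≤ f x)
    (u v : EuclideanSpace ℝ (Fin n) → ℝ)
    (hu : IsViscositySolutionEikonal n U f u)
    (hv : IsViscositySolutionEikonal n U f v)
    (hA : ∀ x ∈ U, f x = 0 → u x ≤ v x) :
    ∀ x ∈ U, u x ≤ v x := by
  obtain ⟨huUC, huB, ⟨huBd, huT⟩, -, -⟩ := hu
  obtain ⟨hvUC, hvB, -, hvBd', hvT'⟩ := hv
  exact eikonal_comparison_aux n U hUopen hUbdd f hf hf0 u v huUC huB huBd huT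
    hvUC hvB hvBd' hvT' hA
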